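/- Let ψ : S(n) → GL(V) be an irreducible unitary representation with character χ^ψ and dimension d_ψ, and let the restriction of ψ to S(n-1) decompose with an irreducible component φ^α of dimension d_α and character χ^α. Then the operator Σ_{a=1}^{n-1} ψ((a,n)), projected to the φ^α-isotypic block of the restriction, acts as the scalar [n(n-1)/2 · χ^ψ((1,2))/d_ψ − (n-1)(n-2)/2 · χ^α((1,2))/d_α] times the identity on that block. -/

import Mathlib

open Equiv Matrix

lemma aux_perm {α : Type*} [DecidableEq α] {a b c d : α} (hab : a ≠ b) (hcd : c ≠ d) :
    ∃ σ : Equiv.Perm α, σ c = a ∧ σ d = b ∧ ∀ x, x ≠ a → x ≠ b → x ≠ c → x ≠ d → σ x = x := by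
  set e := Equiv.swap c a d with he
  have hea : e ≠ a := by
    intro h
    have : d = c := (Equiv.swap c a).injective (by rw [← he, h, Equiv.swap_apply_left])
    exact hcd this.symm
  refine ⟨Equiv.swap e b * Equiv.swap c a, ?_, ?_, ?_⟩
  · rw [Equiv.Perm.mul_apply, Equiv.swap_apply_left,
      Equiv.swap_apply_of_ne_of_ne (Ne.symm hea) hab]
  · rw [Equiv.Perm.mul_apply, ← he, Equiv.swap_apply_left]
  · intro x hxa hxb hxc hxd
    have hxe : x ≠ e := by
      rw [he, Equiv.swap_apply_def]
      split_ifs <;> assumption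
    rw [Equiv.Perm.mul_apply, Equiv.swap_apply_of_ne_of_ne hxc hxa,
      Equiv.swap_apply_of_ne_of_ne hxe hxb]

lemma fix_last_perm {k : ℕ} (σ : Equiv.Perm (Fin (k+1))) (hσ : σ (Fin.last k) = Fin.last k) :
    ∃ e : Equiv.Perm (Fin k), ∀ a : Fin k, (e a).castSucc = σ a.castSucc := by
  have hσ' : σ⁻¹ (Fin.last k) = Fin.last k := by
    simpa using (congrArg (⇑σ⁻¹) hσ).symm
  have h1 : ∀ a : Fin k, σ a.castSucc ≠ Fin.last k := fun a h =>
    (Fin.castSucc_lt_last a).ne (σ.injective (h.trans hσ.symm))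
  have h2 : ∀ a : Fin k, σ⁻¹ a.castSucc ≠ Fin.last k := fun a h =>
    (Fin.castSucc_lt_last a).ne ((σ⁻¹).injective (h.trans hσ'.symm))
  refine ⟨⟨fun a => (σ a.castSucc).castPred (h1 a), fun a => (σ⁻¹ a.castSucc).castPred (h2 a),
    ?_, ?_⟩, fun a => Fin.castSucc_castPred _ (h1 a)⟩
  · intro a
    apply Fin.castSucc_injective
    simp [Fin.castSucc_castPred]
  · intro a
    apply Fin.castSucc_injective
    simp [Fin.castSucc_castPred]

lemma sum_conj {ι M : Type*} [Fintype ι] [AddCommMonoid M] (e : Equiv.Perm ι) (F : ι → ι → M) :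
    ∑ a, ∑ b, F (e a) (e b) = ∑ a, ∑ b, F a b := by
  rw [← Equiv.sum_comp e (fun a => ∑ b, F a b)]
  exact Finset.sum_congr rfl fun a _ => Equiv.sum_comp e (F (e a))

lemma count_ite {k : ℕ} (a : Fin (k+1)) (t : ℂ) :
    (∑ b : Fin (k+1), if a ≠ b then t else 0) = (k : ℂ) * t := by
  have h : ∀ b : Fin (k+1), (if a ≠ b then t else 0) = t - (if a = b then t else 0) := by
    intro b; by_cases h : a = b <;> simp [h]
  rw [Finset.sum_congr rfl fun b _ => h b, Finset.sum_sub_distrib, Finset.sum_const,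
    Finset.sum_ite_eq]
  simp [Finset.card_univ, nsmul_eq_mul]
  push_cast
  ring

/-- Let `ψ` be an irreducible unitary (matrix) representation of `S(n)` (here `n = m+3`,
acting on `Fin (m+3)`, with `S(n-1)` realized as the stabilizer of the last point), with
character `χ^ψ = tr ∘ ψ` and dimension `dψ`.  Let `φ` be an irreducible unitary
representation of the subgroup `S(n-1)` (a function on the ambient group, multiplicative
on elements fixing the last point) of dimension `dα`, and suppose the range of the
projection `P = U Uᴴ` (with `Uᴴ U = 1`) is an `S(n-1)`-invariant subspace on which the
restriction of `ψ` acts as `φ` (the `φ`-isotypic block, multiplicity-free by branching).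
Then `P (Σ_{a=1}^{n-1} ψ((a,n))) P` equals the scalar
`n(n-1)/2 · χ^ψ((1,2))/dψ − (n-1)(n-2)/2 · χ^φ((1,2))/dα` times `P`. -/
theorem stmt4 (m dψ dα : ℕ) (hdψ : 0 < dψ) (hdα : 0 < dα)
    (ψ : Equiv.Perm (Fin (m + 3)) → Matrix (Fin dψ) (Fin dψ) ℂ)
    (hψmul : ∀ σ τ, ψ (σ * τ) = ψ σ * ψ τ)
    (hψone : ψ 1 = 1)
    (hψunitary : ∀ σ, (ψ σ)ᴴ * ψ σ = 1)
    (hψirr : ∀ T : Matrix (Fin dψ) (Fin dψ) ℂ,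
      (∀ σ, T * ψ σ = ψ σ * T) → ∃ c : ℂ, T = c • (1 : Matrix (Fin dψ) (Fin dψ) ℂ))
    (φ : Equiv.Perm (Fin (m + 3)) → Matrix (Fin dα) (Fin dα) ℂ)
    (hφmul : ∀ σ τ, σ (Fin.last (m + 2)) = Fin.last (m + 2) →
      τ (Fin.last (m + 2)) = Fin.last (m + 2) → φ (σ * τ) = φ σ * φ τ)
    (hφone : φ 1 = 1)
    (hφunitary : ∀ σ, σ (Fin.last (m + 2)) = Fin.last (m + 2) → (φ σ)ᴴ * φ σ = 1)
    (hφirr : ∀ T : Matrix (Fin dα) (Fin dα) ℂ,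
      (∀ σ, σ (Fin.last (m + 2)) = Fin.last (m + 2) → T * φ σ = φ σ * T) →
        ∃ c : ℂ, T = c • (1 : Matrix (Fin dα) (Fin dα) ℂ))
    (U : Matrix (Fin dψ) (Fin dα) ℂ) (hU : Uᴴ * U = 1)
    (P : Matrix (Fin dψ) (Fin dψ) ℂ) (hP : P = U * Uᴴ)
    (hint : ∀ σ, σ (Fin.last (m + 2)) = Fin.last (m + 2) → ψ σ * U = U * φ σ) :
    P * (∑ a : Fin (m + 2), ψ (Equiv.swap a.castSucc (Fin.last (m + 2)))) * P =
      ((((m + 3) * (m + 2) / 2 : ℂ)) * (Matrix.trace (ψ (Equiv.swap 0 1)) / (dψ : ℂ))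
        - (((m + 2) * (m + 1) / 2 : ℂ)) *
            (Matrix.trace (φ (Equiv.swap 0 1)) / (dα : ℂ))) • P := by
  set L := Fin.last (m + 2) with hLdef
  have hdψ' : (dψ : ℂ) ≠ 0 := Nat.cast_ne_zero.mpr hdψ.ne'
  have hdα' : (dα : ℂ) ≠ 0 := Nat.cast_ne_zero.mpr hdα.ne'
  -- basic group facts
  have hψinv : ∀ σ : Equiv.Perm (Fin (m+3)), ψ σ⁻¹ * ψ σ = 1 := by
    intro σ; rw [← hψmul, inv_mul_cancel, hψone]
  have htψ : ∀ σ τ : Equiv.Perm (Fin (m+3)), (ψ (σ * τ * σ⁻¹)).trace = (ψ τ).trace := by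
    intro σ τ
    rw [hψmul, hψmul, Matrix.trace_mul_comm, ← Matrix.mul_assoc, hψinv, Matrix.one_mul]
  have h01 : (0 : Fin (m + 3)) ≠ 1 := by simp [Fin.ext_iff]
  have htr1 : ∀ a b : Fin (m+3), a ≠ b →
      (ψ (Equiv.swap a b)).trace = (ψ (Equiv.swap 0 1)).trace := by
    intro a b hab
    obtain ⟨σ, hc, hd, -⟩ := aux_perm hab h01
    rw [← hc, ← hd, Equiv.swap_apply_apply, htψ]
  -- stabilizer facts
  have hLfix : ∀ a b : Fin (m+2), (Equiv.swap a.castSucc b.castSucc) L = L := fun a b =>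
    Equiv.swap_apply_of_ne_of_ne (Fin.castSucc_lt_last a).ne' (Fin.castSucc_lt_last b).ne'
  have hfixinv : ∀ σ : Equiv.Perm (Fin (m+3)), σ L = L → σ⁻¹ L = L := fun σ hσ => by
    simpa using (congrArg (⇑σ⁻¹) hσ).symm
  have hfixmul : ∀ σ τ : Equiv.Perm (Fin (m+3)), σ L = L → τ L = L → (σ * τ) L = L :=
    fun σ τ hσ hτ => by rw [Equiv.Perm.mul_apply, hτ, hσ]
  have hφinv : ∀ σ : Equiv.Perm (Fin (m+3)), σ L = L → φ σ⁻¹ * φ σ = 1 := by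
    intro σ hσ
    rw [← hφmul σ⁻¹ σ (hfixinv σ hσ) hσ, inv_mul_cancel, hφone]
  have htφ : ∀ σ τ : Equiv.Perm (Fin (m+3)), σ L = L → τ L = L →
      (φ (σ * τ * σ⁻¹)).trace = (φ τ).trace := by
    intro σ τ hσ hτ
    rw [hφmul _ _ (hfixmul σ τ hσ hτ) (hfixinv σ hσ), hφmul σ τ hσ hτ,
      Matrix.trace_mul_comm, ← Matrix.mul_assoc, hφinv σ hσ, Matrix.one_mul]
  have htr2 : ∀ a b : Fin (m+2), a ≠ b →
      (φ (Equiv.swap a.castSucc b.castSucc)).trace = (φ (Equiv.swap 0 1)).trace := by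
    intro a b hab
    have h01' : (0 : Fin (m + 2)) ≠ 1 := by simp [Fin.ext_iff]
    obtain ⟨σ, hc, hd, hfix⟩ := aux_perm ((Fin.castSucc_injective _).ne hab)
      ((Fin.castSucc_injective _).ne h01')
    have hσL : σ L = L := hfix L (Fin.castSucc_lt_last _).ne' (Fin.castSucc_lt_last _).ne'
      (Fin.castSucc_lt_last _).ne' (Fin.castSucc_lt_last _).ne'
    have hsw : Equiv.swap a.castSucc b.castSucc =
        σ * Equiv.swap ((0 : Fin (m+2)).castSucc) ((1 : Fin (m+2)).castSucc) * σ⁻¹ := by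
      rw [← Equiv.swap_apply_apply, hc, hd]
    rw [hsw, htφ σ _ hσL (hLfix 0 1), Fin.castSucc_zero, Fin.castSucc_one]
  -- the big invariant sums
  set Z : Matrix (Fin dψ) (Fin dψ) ℂ :=
    ∑ a : Fin (m+3), ∑ b : Fin (m+3), if a ≠ b then ψ (Equiv.swap a b) else 0 with hZdef
  have hZcomm : ∀ σ, Z * ψ σ = ψ σ * Z := by
    intro σ
    have step : ∀ a b : Fin (m+3), ψ σ * (if a ≠ b then ψ (Equiv.swap a b) else 0) =
        (if σ a ≠ σ b then ψ (Equiv.swap (σ a) (σ b)) else 0) * ψ σ := by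
      intro a b
      by_cases hab : a = b
      · simp [hab]
      · rw [if_pos hab, if_pos (σ.injective.ne hab), ← hψmul, ← hψmul]
        congr 1
        rw [Equiv.swap_apply_apply]
        group
    symm
    calc ψ σ * Z = ∑ a : Fin (m+3), ∑ b : Fin (m+3),
        ψ σ * (if a ≠ b then ψ (Equiv.swap a b) else 0) := by
          rw [hZdef]; simp only [Finset.mul_sum]
      _ = ∑ a : Fin (m+3), ∑ b : Fin (m+3),
        (if σ a ≠ σ b then ψ (Equiv.swap (σ a) (σ b)) else 0) * ψ σ := by
          simp only [step]
      _ = ∑ a : Fin (m+3), ∑ b : Fin (m+3),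
        (if a ≠ b then ψ (Equiv.swap a b) else 0) * ψ σ :=
          sum_conj σ (fun x y => (if x ≠ y then ψ (Equiv.swap x y) else 0) * ψ σ)
      _ = Z * ψ σ := by rw [hZdef]; simp only [Finset.sum_mul]
  obtain ⟨cψ, hcψ⟩ := hψirr Z hZcomm
  have htrZ : Z.trace = ((m+3) * (m+2) : ℂ) * (ψ (Equiv.swap 0 1)).trace := by
    rw [hZdef]
    simp only [Matrix.trace_sum]
    have h : ∀ a b : Fin (m+3), (if a ≠ b then ψ (Equiv.swap a b) else 0).trace =
        if a ≠ b then (ψ (Equiv.swap 0 1)).trace else 0 := by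
      intro a b
      by_cases hab : a = b
      · simp [hab]
      · rw [if_pos hab, if_pos hab, htr1 a b hab]
    simp only [h]
    have h2 : ∀ a : Fin (m+3), (∑ b : Fin (m+3),
        if a ≠ b then (ψ (Equiv.swap 0 1)).trace else 0) =
        ((m+2 : ℕ) : ℂ) * (ψ (Equiv.swap 0 1)).trace := fun a => count_ite a _
    simp only [h2]
    rw [Finset.sum_const, Finset.card_univ, Fintype.card_fin, nsmul_eq_mul]
    push_cast
    ring
  have hcψtr : cψ * dψ = ((m+3) * (m+2) : ℂ) * (ψ (Equiv.swap 0 1)).trace := by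
    have h := congrArg Matrix.trace hcψ
    rw [htrZ, Matrix.trace_smul, Matrix.trace_one] at h
    simp only [Fintype.card_fin, smul_eq_mul] at h
    exact h.symm
  -- the W sum for φ over the stabilizer
  set W : Matrix (Fin dα) (Fin dα) ℂ :=
    ∑ a : Fin (m+2), ∑ b : Fin (m+2),
      if a ≠ b then φ (Equiv.swap a.castSucc b.castSucc) else 0 with hWdef
  have hWcomm : ∀ σ, σ L = L → W * φ σ = φ σ * W := by
    intro σ hσ
    obtain ⟨e, he⟩ := fix_last_perm σ hσ
    have step : ∀ a b : Fin (m+2),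
        φ σ * (if a ≠ b then φ (Equiv.swap a.castSucc b.castSucc) else 0) =
        (if e a ≠ e b then φ (Equiv.swap (e a).castSucc (e b).castSucc) else 0) * φ σ := by
      intro a b
      by_cases hab : a = b
      · simp [hab]
      · rw [if_pos hab, if_pos (e.injective.ne hab),
          ← hφmul σ _ hσ (hLfix a b), ← hφmul _ σ (hLfix (e a) (e b)) hσ]
        congr 1
        rw [he, he]
        rw [Equiv.swap_apply_apply]
        group
    symm
    calc φ σ * W = ∑ a : Fin (m+2), ∑ b : Fin (m+2),
        φ σ * (if a ≠ b then φ (Equiv.swap a.castSucc b.castSucc) else 0) := by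
          rw [hWdef]; simp only [Finset.mul_sum]
      _ = ∑ a : Fin (m+2), ∑ b : Fin (m+2),
        (if e a ≠ e b then φ (Equiv.swap (e a).castSucc (e b).castSucc) else 0) * φ σ := by
          simp only [step]
      _ = ∑ a : Fin (m+2), ∑ b : Fin (m+2),
        (if a ≠ b then φ (Equiv.swap a.castSucc b.castSucc) else 0) * φ σ :=
          sum_conj e (fun x y =>
            (if x ≠ y then φ (Equiv.swap x.castSucc y.castSucc) else 0) * φ σ)
      _ = W * φ σ := by rw [hWdef]; simp only [Finset.sum_mul]
  obtain ⟨cα, hcα⟩ := hφirr W hWcomm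
  have htrW : W.trace = ((m+2) * (m+1) : ℂ) * (φ (Equiv.swap 0 1)).trace := by
    rw [hWdef]
    simp only [Matrix.trace_sum]
    have h : ∀ a b : Fin (m+2),
        (if a ≠ b then φ (Equiv.swap a.castSucc b.castSucc) else 0).trace =
        if a ≠ b then (φ (Equiv.swap 0 1)).trace else 0 := by
      intro a b
      by_cases hab : a = b
      · simp [hab]
      · rw [if_pos hab, if_pos hab, htr2 a b hab]
    simp only [h]
    have h2 : ∀ a : Fin (m+2), (∑ b : Fin (m+2),
        if a ≠ b then (φ (Equiv.swap 0 1)).trace else 0) =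
        ((m+1 : ℕ) : ℂ) * (φ (Equiv.swap 0 1)).trace := fun a => count_ite a _
    simp only [h2]
    rw [Finset.sum_const, Finset.card_univ, Fintype.card_fin, nsmul_eq_mul]
    push_cast
    ring
  have hcαtr : cα * dα = ((m+2) * (m+1) : ℂ) * (φ (Equiv.swap 0 1)).trace := by
    have h := congrArg Matrix.trace hcα
    rw [htrW, Matrix.trace_smul, Matrix.trace_one] at h
    simp only [Fintype.card_fin, smul_eq_mul] at h
    exact h.symm
  -- the restricted sum and the bridge
  set Zres : Matrix (Fin dψ) (Fin dψ) ℂ :=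
    ∑ a : Fin (m+2), ∑ b : Fin (m+2),
      if a ≠ b then ψ (Equiv.swap a.castSucc b.castSucc) else 0 with hZresdef
  have hbridge : Zres * U = U * W := by
    rw [hZresdef, hWdef, Matrix.sum_mul, Matrix.mul_sum]
    refine Finset.sum_congr rfl fun a _ => ?_
    rw [Matrix.sum_mul, Matrix.mul_sum]
    refine Finset.sum_congr rfl fun b _ => ?_
    by_cases hab : a = b
    · simp [hab]
    · rw [if_pos hab, if_pos hab]
      exact hint _ (hLfix a b)
  set S : Matrix (Fin dψ) (Fin dψ) ℂ :=
    ∑ a : Fin (m+2), ψ (Equiv.swap a.castSucc L) with hSdef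
  -- decomposition Z = Zres + S + S
  have hsplit : Z = Zres + S + S := by
    rw [hZdef, Fin.sum_univ_castSucc (f := fun a : Fin (m+3) =>
      ∑ b : Fin (m+3), if a ≠ b then ψ (Equiv.swap a b) else 0)]
    have inner1 : ∀ a : Fin (m+2),
        (∑ b : Fin (m+3), if a.castSucc ≠ b then ψ (Equiv.swap a.castSucc b) else 0) =
        (∑ b : Fin (m+2), if a ≠ b then ψ (Equiv.swap a.castSucc b.castSucc) else 0)
          + ψ (Equiv.swap a.castSucc L) := by
      intro a
      rw [Fin.sum_univ_castSucc (f := fun b : Fin (m+3) =>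
        if a.castSucc ≠ b then ψ (Equiv.swap a.castSucc b) else 0)]
      congr 1
      · refine Finset.sum_congr rfl fun b _ => ?_
        simp [Ne, Fin.castSucc_inj]
      · rw [if_pos (Fin.castSucc_lt_last a).ne]
    have inner2 : (∑ b : Fin (m+3), if L ≠ b then ψ (Equiv.swap L b) else 0) =
        ∑ b : Fin (m+2), ψ (Equiv.swap b.castSucc L) := by
      rw [Fin.sum_univ_castSucc (f := fun b : Fin (m+3) =>
        if L ≠ b then ψ (Equiv.swap L b) else 0)]
      rw [if_neg (by simp [hLdef]), add_zero]
      refine Finset.sum_congr rfl fun b _ => ?_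
      rw [if_pos (Fin.castSucc_lt_last b).ne', Equiv.swap_comm]
    rw [inner2, Finset.sum_congr rfl fun a _ => inner1 a, Finset.sum_add_distrib,
      hZresdef, hSdef]
  -- projection computations
  have hPP : P * P = P := by
    rw [hP, Matrix.mul_assoc, ← Matrix.mul_assoc Uᴴ U Uᴴ, hU, Matrix.one_mul]
  have hPZP : P * Z * P = cψ • P := by
    rw [hcψ, Matrix.mul_smul, Matrix.mul_one, Matrix.smul_mul, hPP]
  have hPZresP : P * Zres * P = cα • P := by
    calc P * Zres * P = U * Uᴴ * Zres * (U * Uᴴ) := by rw [hP]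
      _ = U * Uᴴ * (Zres * U) * Uᴴ := by simp only [Matrix.mul_assoc]
      _ = U * Uᴴ * (U * W) * Uᴴ := by rw [hbridge]
      _ = U * ((Uᴴ * U) * (W * Uᴴ)) := by simp only [Matrix.mul_assoc]
      _ = U * W * Uᴴ := by rw [hU, Matrix.one_mul, Matrix.mul_assoc]
      _ = cα • P := by
          rw [hcα, hP, Matrix.mul_smul, Matrix.mul_one, Matrix.smul_mul]
  have hsum : P * S * P + P * S * P = (cψ - cα) • P := by
    have hexp : P * Z * P = P * Zres * P + P * S * P + P * S * P := by
      rw [hsplit]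
      simp only [Matrix.mul_add, Matrix.add_mul]
    rw [hPZP, hPZresP] at hexp
    rw [sub_smul, hexp]
    abel
  have hX : P * S * P = ((cψ - cα) / 2) • P := by
    have h2 : (2:ℂ) • (P * S * P) = (cψ - cα) • P := by rw [two_smul]; exact hsum
    calc P * S * P = (2:ℂ)⁻¹ • ((2:ℂ) • (P * S * P)) := by rw [smul_smul]; norm_num
      _ = (2:ℂ)⁻¹ • ((cψ - cα) • P) := by rw [h2]
      _ = ((cψ - cα) / 2) • P := by rw [smul_smul]; congr 1; ring
  rw [hX]
  congr 1
  have hcψ' : cψ = ((m+3) * (m+2) : ℂ) * (ψ (Equiv.swap 0 1)).trace / dψ := by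
    rw [eq_div_iff hdψ']; exact hcψtr
  have hcα' : cα = ((m+2) * (m+1) : ℂ) * (φ (Equiv.swap 0 1)).trace / dα := by
    rw [eq_div_iff hdα']; exact hcαtr
  rw [hcψ', hcα']
  field_simp
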